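/- Let G₁, G₂ be abelian topological groups, let H₁ ⊆ G₁, H₂ ⊆ G₂ be closed subgroups, and let φ : G₁ → G₂ be a continuous homomorphism with φ(H₁) ⊆ H₂. Suppose the induced map φ̄ : G₁/H₁ → G₂/H₂ is injective. If moreover φ and the restriction φ|_{H₁} : H₁ → H₂ are topological embeddings onto closed subgroups, and the filtration hypotheses hold (G₁/H₁ carries the weak topology of a filtration by compact sets C_k with φ̄(C_k) closed in the corresponding filtration of G₂/H₂ and φ̄⁻¹ of the k-th filtered piece of G₂/H₂ contained in C_k), then φ̄ is a closed topological embedding. -/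

import Mathlib

/-- Let `φ : G₁ → G₂` be a continuous homomorphism of abelian topological groups carrying a
closed subgroup `H₁` into a closed subgroup `H₂`, inducing an injective map
`φ̄ : G₁/H₁ → G₂/H₂`.  If `φ` and `φ|_{H₁}` are closed embeddings and the quotients carry
weak topologies of compact filtrations `C k`, `D k` with `φ̄ '' C k ⊆ D k` and
`φ̄ ⁻¹ (D k) ⊆ C k`, then `φ̄` is a closed topological embedding. -/
theorem induced_quotient_map_closedEmbedding
    {G₁ G₂ : Type*} [AddCommGroup G₁] [TopologicalSpace G₁] [IsTopologicalAddGroup G₁]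
    [AddCommGroup G₂] [TopologicalSpace G₂] [IsTopologicalAddGroup G₂]
    (H₁ : AddSubgroup G₁) (H₂ : AddSubgroup G₂)
    (hH₁ : IsClosed (H₁ : Set G₁)) (hH₂ : IsClosed (H₂ : Set G₂))
    (φ : G₁ →+ G₂) (hφc : Continuous φ) (hφH : H₁ ≤ H₂.comap φ)
    (φbar : G₁ ⧸ H₁ →+ G₂ ⧸ H₂) (hφbar : φbar = QuotientAddGroup.map H₁ H₂ φ hφH)
    (hinj : Function.Injective ⇑φbar)
    (hφemb : Topology.IsClosedEmbedding ⇑φ)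
    (hφHemb : Topology.IsClosedEmbedding fun x : H₁ => (⟨φ x, hφH x.2⟩ : H₂))
    (Cf : ℕ → Set (G₁ ⧸ H₁)) (Df : ℕ → Set (G₂ ⧸ H₂))
    (hCcpt : ∀ k, IsCompact (Cf k)) (hDcpt : ∀ k, IsCompact (Df k))
    (hCmono : Monotone Cf) (hDmono : Monotone Df)
    (hCcover : ⋃ k, Cf k = Set.univ) (hDcover : ⋃ k, Df k = Set.univ)
    (hCweak : ∀ S : Set (G₁ ⧸ H₁), IsClosed S ↔ ∀ k, IsClosed (S ∩ Cf k))
    (hDweak : ∀ S : Set (G₂ ⧸ H₂), IsClosed S ↔ ∀ k, IsClosed (S ∩ Df k))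
    (hCD : ∀ k, φbar '' Cf k ⊆ Df k) (hDC : ∀ k, φbar ⁻¹' Df k ⊆ Cf k) :
    Topology.IsClosedEmbedding ⇑φbar := by
  -- G₂ ⧸ H₂ is Hausdorff since H₂ is closed
  have : H₂.Normal := inferInstance
  have ht2 : T2Space (G₂ ⧸ H₂) := by
    haveI : IsClosed (H₂.toAddSubmonoid : Set G₂) := hH₂
    infer_instance
  -- continuity of φbar
  have hcont : Continuous ⇑φbar := by
    rw [(QuotientAddGroup.isQuotientMap_mk H₁).continuous_iff]
    have : (⇑φbar ∘ QuotientAddGroup.mk) = (QuotientAddGroup.mk ∘ ⇑φ) := by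
      funext x
      simp [hφbar]
    rw [this]
    exact continuous_quot_mk.comp hφc
  have hclosed : IsClosedMap ⇑φbar := by
    intro S hS
    rw [hDweak]
    intro k
    have key : (⇑φbar '' S) ∩ Df k = (⇑φbar '' (S ∩ Cf k)) ∩ Df k := by
      ext y
      constructor
      · rintro ⟨⟨x, hxS, rfl⟩, hyD⟩
        exact ⟨⟨x, ⟨hxS, hDC k hyD⟩, rfl⟩, hyD⟩
      · rintro ⟨⟨x, ⟨hxS, _⟩, rfl⟩, hyD⟩
        exact ⟨⟨x, hxS, rfl⟩, hyD⟩
    rw [key]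
    have hcS : IsCompact (S ∩ Cf k) := ((hCcpt k).inter_left hS)
    have h1 : IsClosed (⇑φbar '' (S ∩ Cf k)) := (hcS.image hcont).isClosed
    exact h1.inter (hDcpt k).isClosed
  exact Topology.IsClosedEmbedding.of_continuous_injective_isClosedMap hcont hinj hclosed
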